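/- In the Hopf algebra QSym of quasisymmetric functions, the antipode acts on the fundamental basis by S(F_α) = (-1)^{|α|} F_{α^t}, where α^t is the conjugate (transpose) of the composition α. -/

import Mathlib

open TensorProduct

/-- The multiset of all shuffles (interleavings) of two words. -/
def shuffles {α : Type*} : List α → List α → Multiset (List α)
  | [], w => {w}
  | a :: v, [] => {a :: v}
  | a :: v, b :: w =>
      ((shuffles v (b :: w)).map (a :: ·)) + ((shuffles (a :: v) w).map (b :: ·))
  termination_by v w => v.length + w.length
  decreasing_by all_goals (simp; try omega)

/-- The descent composition of a word of distinct letters: the composition of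
`w.length` recording the maximal increasing runs, i.e. corresponding to the
descent set `{i : w_i > w_{i+1}}`. -/
def descComp : List ℕ → List ℕ
  | [] => []
  | [_] => [1]
  | a :: b :: t =>
      if b < a then 1 :: descComp (b :: t)
      else
        match descComp (b :: t) with
        | [] => [1]
        | c :: r => (c + 1) :: r

/-- Splitting a composition `α` of `n` at position `i` (with `0 ≤ i ≤ n`) along
the ribbon diagram: the first `i` cells form the first composition and the
remaining cells the second (a part through which the cut passes is divided in
two). -/
def splitComp : List ℕ → ℕ → List ℕ × List ℕ
  | [], _ => ([], [])
  | a :: t, i =>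
      if i = 0 then ([], a :: t)
      else if i < a then ([i], (a - i) :: t)
      else
        let p := splitComp t (i - a)
        (a :: p.1, p.2)

/-- The list of partial sums of a composition. -/
def psums : List ℕ → List ℕ
  | [] => []
  | a :: t => a :: (psums t).map (a + ·)

/-- The descent set of a composition `α ⊨ n`: the set of proper partial sums,
a subset of `{1, …, n-1}`. -/
def Dset (α : List ℕ) : Finset ℕ := (psums α).dropLast.toFinset

/-- Successive differences, used to reconstruct a composition from its descent
set. -/
def diffs : ℕ → List ℕ → ℕ → List ℕ
  | prev, [], n => [n - prev]
  | prev, x :: xs, n => (x - prev) :: diffs x xs n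

/-- The composition of `n` with descent set `S ⊆ {1, …, n-1}`. -/
def compOfSet (n : ℕ) (S : Finset ℕ) : List ℕ :=
  if n = 0 then [] else diffs 0 (S.sort (· ≤ ·)) n

/-- The conjugate (transpose) of a composition `α ⊨ n`: under the bijection
with subsets of `{1, …, n-1}` it corresponds to the complement of the reverse
of the descent set of `α`. -/
def conj (α : List ℕ) : List ℕ :=
  compOfSet α.sum
    ((Finset.Ioo 0 α.sum).filter (fun i => α.sum - i ∉ Dset α))

lemma descComp_lt {a b : ℕ} (t : List ℕ) (h : b < a) :
    descComp (a::b::t) = 1 :: descComp (b::t) := by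
  simp [descComp, h]

lemma descComp_head : ∀ (l : List ℕ), l ≠ [] → ∃ c r, descComp l = c :: r ∧ 0 < c
  | [a], _ => ⟨1, [], rfl, one_pos⟩
  | a :: b :: t, _ => by
    obtain ⟨c, r, hd, hc⟩ := descComp_head (b :: t) (by simp)
    by_cases h : b < a
    · exact ⟨1, descComp (b::t), descComp_lt t h, one_pos⟩
    · exact ⟨c + 1, r, by simp [descComp, h, hd], by omega⟩

lemma descComp_ge {a b : ℕ} (t : List ℕ) (h : ¬ b < a) {c : ℕ} {r : List ℕ}
    (hd : descComp (b::t) = c :: r) : descComp (a::b::t) = (c+1) :: r := by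
  simp [descComp, h, hd]

lemma descComp_sum : ∀ (l : List ℕ), (descComp l).sum = l.length
  | [] => rfl
  | [a] => rfl
  | a :: b :: t => by
    obtain ⟨c, r, hd, hc⟩ := descComp_head (b :: t) (by simp)
    have ih := descComp_sum (b :: t)
    by_cases h : b < a
    · rw [descComp_lt t h]; simp at ih ⊢; omega
    · rw [descComp_ge t h hd]; rw [hd] at ih; simp at ih ⊢; omega

lemma descComp_pos : ∀ (l : List ℕ), ∀ p ∈ descComp l, 0 < p
  | [] => by simp [descComp]
  | [a] => by simp [descComp]
  | a :: b :: t => by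
    obtain ⟨c, r, hd, hc⟩ := descComp_head (b :: t) (by simp)
    have ih := descComp_pos (b :: t)
    rw [hd] at ih
    by_cases h : b < a
    · rw [descComp_lt t h, hd]; intro p hp
      simp only [List.mem_cons] at hp
      rcases hp with rfl | rfl | hp
      · exact one_pos
      · exact hc
      · exact ih _ (List.mem_cons_of_mem _ hp)
    · rw [descComp_ge t h hd]; intro p hp
      simp only [List.mem_cons] at hp
      rcases hp with rfl | hp
      · omega
      · exact ih _ (List.mem_cons_of_mem _ hp)

lemma splitComp_zero : ∀ l : List ℕ, splitComp l 0 = ([], l) := by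
  intro l; cases l <;> simp [splitComp]

lemma splitComp_descComp : ∀ (u : List ℕ) (i : ℕ), i ≤ u.length →
    splitComp (descComp u) i = (descComp (u.take i), descComp (u.drop i))
  | [], i, hi => by
    simp at hi; subst hi; simp [splitComp, descComp]
  | [a], i, hi => by
    simp at hi
    interval_cases i
    · simp [splitComp_zero, descComp]
    · simp [splitComp, descComp]
  | a :: b :: t, i, hi => by
    obtain ⟨c, r, hd, hc⟩ := descComp_head (b :: t) (by simp)
    rcases i with _ | j
    · simp [splitComp_zero, descComp]
    · have hj : j ≤ (b::t).length := by simpa using Nat.le_of_succ_le_succ hi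
      have IH := splitComp_descComp (b::t) j hj
      rw [hd] at IH
      rw [List.drop_succ_cons]
      by_cases h : b < a
      · rw [descComp_lt t h, hd]
        have h1 : splitComp (1 :: c :: r) (j+1)
            = (1 :: (splitComp (c::r) j).1, (splitComp (c::r) j).2) := by
          simp [splitComp]
        rw [h1, IH]
        simp only [List.take_succ_cons]
        rcases j with _ | k
        · simp [descComp]
        · simp only [List.take_succ_cons, descComp_lt (t.take k) h]
      · rw [descComp_ge t h hd]
        rcases j with _ | k
        · have h1 : (1:ℕ) < c + 1 := by omega
          have h2 : splitComp ((c+1) :: r) 1 = ([1], c :: r) := by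
            simp [splitComp, h1]
          rw [h2]
          simp [descComp, hd]
        · simp only [List.take_succ_cons]
          by_cases hcase : k + 2 < c + 1
          · have e1 : splitComp ((c+1) :: r) (k+2) = ([k+2], (c-(k+1)) :: r) := by
              have h3 : c + 1 - (k+2) = c - (k+1) := by omega
              simp [splitComp, hcase, h3]
            have e2 : splitComp (c :: r) (k+1) = ([k+1], (c-(k+1)) :: r) := by
              have hk : k + 1 < c := by omega
              simp [splitComp, hk]
            rw [e2] at IH
            rw [e1]
            have hd' : descComp (b :: t.take k) = [k+1] := by
              simpa [List.take_succ_cons] using (congrArg Prod.fst IH).symm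
            have hd'' := congrArg Prod.snd IH
            simp only at hd''
            rw [descComp_ge (t.take k) h hd', ← hd'']
          · have e1 : splitComp ((c+1) :: r) (k+2)
                = ((c+1) :: (splitComp r (k+1-c)).1, (splitComp r (k+1-c)).2) := by
              have h0 : ¬ (k + 2 < c + 1) := hcase
              have h3 : k + 2 - (c+1) = k + 1 - c := by omega
              simp [splitComp, h0, h3]
            have e2 : splitComp (c :: r) (k+1)
                = (c :: (splitComp r (k+1-c)).1, (splitComp r (k+1-c)).2) := by
              have h0 : ¬ (k + 1 < c) := by omega
              simp [splitComp, h0]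
            rw [e2] at IH
            rw [e1]
            have hd' : descComp (b :: t.take k) = c :: (splitComp r (k+1-c)).1 := by
              simpa [List.take_succ_cons] using (congrArg Prod.fst IH).symm
            have hd'' := congrArg Prod.snd IH
            simp only at hd''
            rw [descComp_ge (t.take k) h hd', ← hd'']

/-- A canonical modeling word for a composition. -/
def wordOf : List ℕ → List ℕ
  | [] => []
  | a :: t => List.range' t.sum a ++ wordOf t

lemma wordOf_length : ∀ α : List ℕ, (wordOf α).length = α.sum
  | [] => rfl
  | a :: t => by simp [wordOf, wordOf_length t]

lemma wordOf_mem_lt : ∀ (α : List ℕ) (x : ℕ), x ∈ wordOf α → x < α.sum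
  | a :: t, x, hx => by
    simp [wordOf, List.mem_range'] at hx
    rcases hx with ⟨i, hi, rfl⟩ | hx
    · simp; omega
    · have := wordOf_mem_lt t x hx; simp; omega

lemma wordOf_nodup : ∀ α : List ℕ, (wordOf α).Nodup
  | [] => List.nodup_nil
  | a :: t => by
    rw [wordOf, List.nodup_append]
    refine ⟨List.nodup_range', wordOf_nodup t, ?_⟩
    intro x hx y hy hxy
    subst hxy
    simp [List.mem_range'] at hx
    have := wordOf_mem_lt t x hy
    omega

lemma descComp_run : ∀ (a s : ℕ) (u : List ℕ), 0 < a →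
    (∀ h tl, u = h :: tl → h < s) →
    descComp (List.range' s a ++ u) = a :: descComp u
  | 1, s, u, _, hu => by
    rcases u with _ | ⟨h, tl⟩
    · simp [descComp]
    · have := hu h tl rfl
      simp [descComp_lt tl this]
  | a+2, s, u, _, hu => by
    have IH := descComp_run (a+1) (s+1) u (by omega) (fun h tl he => by
      have := hu h tl he; omega)
    have hr : List.range' s (a+2) ++ u = s :: (List.range' (s+1) (a+1) ++ u) := by
      rw [List.range'_succ]; simp
    rw [hr]
    have hcons : List.range' (s+1) (a+1) ++ u = (s+1) :: (List.range' (s+2) a ++ u) := by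
      rw [List.range'_succ]; simp
    rw [hcons] at IH ⊢
    exact descComp_ge _ (by omega) IH

lemma descComp_wordOf : ∀ α : List ℕ, (∀ i ∈ α, 0 < i) → descComp (wordOf α) = α
  | [], _ => rfl
  | a :: t, hpos => by
    rw [wordOf]
    have ha : 0 < a := hpos a (by simp)
    have hhead : ∀ h tl, wordOf t = h :: tl → h < t.sum := by
      intro h tl he
      exact wordOf_mem_lt t h (by rw [he]; simp)
    rw [descComp_run a t.sum (wordOf t) ha hhead,
      descComp_wordOf t (fun i hi => hpos i (by simp [hi]))]

lemma psums_cons (a : ℕ) (t : List ℕ) : psums (a :: t) = a :: (psums t).map (a + ·) := rfl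

lemma psums_shift (c : ℕ) (r : List ℕ) : psums ((c+1)::r) = (psums (c::r)).map (1+·) := by
  have h : (fun x => 1 + (c + x)) = (fun x => (c+1) + x) := by funext x; omega
  simp [psums_cons, List.map_map, Function.comp_def, h]
  omega

lemma psums_ne_nil {l : List ℕ} (h : l ≠ []) : psums l ≠ [] := by
  rcases l with _ | ⟨a, t⟩
  · exact absurd rfl h
  · simp [psums_cons]

lemma mem_Dset_cons (a b : ℕ) (t : List ℕ) (j : ℕ) :
    j ∈ Dset (descComp (a :: b :: t)) ↔
      (j = 1 ∧ b < a) ∨ ∃ j' ∈ Dset (descComp (b :: t)), j = 1 + j' := by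
  obtain ⟨c, r, hd, hc⟩ := descComp_head (b :: t) (by simp)
  have hP : psums (descComp (b :: t)) ≠ [] := by
    rw [hd]; exact psums_ne_nil (by simp)
  by_cases h : b < a
  · rw [descComp_lt t h]
    unfold Dset
    rw [psums_cons]
    have h1 : ((1:ℕ) :: (psums (descComp (b::t))).map (1 + ·)).dropLast
        = 1 :: ((psums (descComp (b::t))).dropLast).map (1 + ·) := by
      rw [List.dropLast_cons_of_ne_nil (by simpa using hP), List.map_dropLast]
    rw [h1]
    simp only [Dset, List.mem_toFinset, List.mem_cons, List.mem_map, h, and_true]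
    constructor
    · rintro (rfl | ⟨j', hj', rfl⟩)
      · exact Or.inl rfl
      · exact Or.inr ⟨j', hj', rfl⟩
    · rintro (rfl | ⟨j', hj', rfl⟩)
      · exact Or.inl rfl
      · exact Or.inr ⟨j', hj', rfl⟩
  · rw [descComp_ge t h hd, hd]
    unfold Dset
    rw [psums_shift, ← List.map_dropLast]
    simp only [List.mem_toFinset, List.mem_map, h, and_false, false_or]
    constructor
    · rintro ⟨j', hj', rfl⟩; exact ⟨j', hj', rfl⟩
    · rintro ⟨j', hj', rfl⟩; exact ⟨j', hj', rfl⟩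

lemma mem_Dset_iff : ∀ (u : List ℕ) (j : ℕ),
    j ∈ Dset (descComp u) ↔ ∃ v x y w, u = v ++ x :: y :: w ∧ j = v.length + 1 ∧ y < x
  | [], j => by
    constructor
    · intro hj
      simp [Dset, descComp, psums] at hj
    · rintro ⟨v, x, y, w, h, -, -⟩
      exact absurd (congrArg List.length h) (by simp)
  | [a], j => by
    constructor
    · intro hj
      simp [Dset, descComp, psums] at hj
    · rintro ⟨v, x, y, w, h, -, -⟩
      exact absurd (congrArg List.length h) (by simp; omega)
  | a :: b :: t, j => by
    rw [mem_Dset_cons]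
    constructor
    · rintro (⟨rfl, hlt⟩ | ⟨j', hj', rfl⟩)
      · exact ⟨[], a, b, t, rfl, rfl, hlt⟩
      · obtain ⟨v, x, y, w, he, rfl, hyx⟩ := (mem_Dset_iff (b :: t) j').1 hj'
        exact ⟨a :: v, x, y, w, by simp [he], by simp [Nat.add_comm], hyx⟩
    · rintro ⟨v, x, y, w, he, rfl, hyx⟩
      rcases v with _ | ⟨a', v0⟩
      · simp at he
        obtain ⟨rfl, rfl, rfl⟩ := he
        exact Or.inl ⟨rfl, hyx⟩
      · simp at he
        obtain ⟨rfl, he⟩ := he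
        refine Or.inr ⟨v0.length + 1, (mem_Dset_iff (b :: t) _).2 ⟨v0, x, y, w, he, rfl, hyx⟩, by simp [Nat.add_comm]⟩

lemma psums_pos : ∀ (α : List ℕ), (∀ p ∈ α, 0 < p) → ∀ p ∈ psums α, 0 < p
  | [], _, p, hp => by simp [psums] at hp
  | a :: t, h, p, hp => by
    rw [psums_cons] at hp
    rcases List.mem_cons.1 hp with rfl | hp
    · exact h p (by simp)
    · obtain ⟨z, hz, rfl⟩ := List.mem_map.1 hp
      have := h a (by simp)
      omega

lemma psums_chain : ∀ (α : List ℕ), (∀ p ∈ α, 0 < p) → List.Chain' (· < ·) (psums α)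
  | [], _ => List.isChain_nil
  | a :: t, h => by
    rw [psums_cons]
    unfold List.Chain'; rw [List.isChain_cons]
    constructor
    · intro y hy
      rcases hm : (psums t).map (a + ·) with _ | ⟨z, zs⟩
      · simp [hm] at hy
      · simp [hm] at hy
        subst hy
        obtain ⟨z0, hz0, rfl⟩ : ∃ z0 ∈ psums t, a + z0 = z := by
          have : z ∈ (psums t).map (a + ·) := by rw [hm]; simp
          simpa using this
        have := psums_pos t (fun p hp => h p (by simp [hp])) z0 hz0
        omega
    · rw [List.isChain_map]
      have := psums_chain t (fun p hp => h p (by simp [hp]))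
      exact this.imp (fun x y hxy => by omega)

lemma diffs_shift : ∀ (L : List ℕ) (p m a : ℕ),
    diffs (a + p) (L.map (a + ·)) (a + m) = diffs p L m
  | [], p, m, a => by simp [diffs]; omega
  | x :: xs, p, m, a => by
    simp only [List.map_cons, diffs]
    rw [diffs_shift xs x m a]
    congr 1
    omega

lemma diffs_psums : ∀ (α : List ℕ), (∀ p ∈ α, 0 < p) → α ≠ [] →
    diffs 0 ((psums α).dropLast) α.sum = α
  | [a], h, _ => by simp [psums, diffs]
  | a :: b :: t, h, _ => by
    have hne : psums (b :: t) ≠ [] := psums_ne_nil (by simp)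
    rw [psums_cons, List.dropLast_cons_of_ne_nil (by simpa using hne),
      ← List.map_dropLast]
    show (a - 0) :: diffs a (((psums (b::t)).dropLast).map (a + ·)) ((a :: b :: t).sum) = _
    have hsum : (a :: b :: t).sum = a + (b :: t).sum := by simp
    rw [hsum]
    have := diffs_shift ((psums (b::t)).dropLast) 0 ((b::t).sum) a
    rw [Nat.add_zero] at this
    rw [this, diffs_psums (b :: t) (fun p hp => h p (by simp at hp ⊢; tauto)) (by simp)]
    simp

lemma compOfSet_Dset (β : List ℕ) (h : ∀ p ∈ β, 0 < p) :
    compOfSet β.sum (Dset β) = β := by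
  rcases β with _ | ⟨b, t⟩
  · simp [compOfSet]
  · have hs : (b :: t).sum ≠ 0 := by
      have := h b (by simp); simp; omega
    rw [compOfSet, if_neg hs]
    have hchain : List.Chain' (· < ·) ((psums (b::t)).dropLast) :=
      (psums_chain (b::t) h).sublist (List.dropLast_sublist _)
    have hpw : List.Pairwise (· < ·) ((psums (b::t)).dropLast) :=
      List.isChain_iff_pairwise.1 hchain
    have hnd : ((psums (b::t)).dropLast).Nodup := hpw.imp (fun hxy => Nat.ne_of_lt hxy)
    have hsorted : List.Pairwise (· ≤ ·) ((psums (b::t)).dropLast) :=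
      hpw.imp (fun hxy => Nat.le_of_lt hxy)
    have : Finset.sort (Dset (b::t)) (· ≤ ·) = (psums (b::t)).dropLast :=
      (List.toFinset_sort (· ≤ ·) hnd).2 hsorted
    rw [this, diffs_psums (b::t) h (by simp)]

lemma Dset_reverse (u : List ℕ) (hu : u.Nodup) :
    Dset (descComp u.reverse) =
      (Finset.Ioo 0 u.length).filter (fun i => u.length - i ∉ Dset (descComp u)) := by
  ext j
  rw [mem_Dset_iff, Finset.mem_filter, Finset.mem_Ioo]
  constructor
  · rintro ⟨v, x, y, w, he, rfl, hyx⟩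
    have hu' : u = w.reverse ++ y :: x :: v.reverse := by
      have := congrArg List.reverse he
      simpa using this
    have hlen : u.length = v.length + w.length + 2 := by
      rw [hu']; simp; omega
    refine ⟨⟨by omega, by omega⟩, ?_⟩
    intro hmem
    obtain ⟨v', x', y', w', he', hj', hy'x'⟩ := (mem_Dset_iff u _).1 hmem
    have hlen' : v'.length = w.reverse.length := by
      have := congrArg List.length he'
      simp at this
      simp
      omega
    rw [hu'] at he'
    obtain ⟨-, heq⟩ := List.append_inj he'.symm (by omega)
    obtain ⟨rfl, rfl, -⟩ : x' = y ∧ y' = x ∧ w' = v.reverse := by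
      simpa using heq
    omega
  · rintro ⟨⟨hj0, hjn⟩, hnot⟩
    set n := u.length with hn
    set k := n - j with hk
    have hk1 : k - 1 < n := by omega
    have hk2 : k < n := by omega
    have hdrop : u.drop (k - 1) = u[k-1] :: u[k] :: u.drop (k + 1) := by
      have e : k - 1 + 1 = k := by omega
      rw [List.drop_eq_getElem_cons hk1, e, List.drop_eq_getElem_cons hk2]
    have hu' : u = u.take (k-1) ++ u[k-1] :: u[k] :: u.drop (k+1) := by
      conv_lhs => rw [← List.take_append_drop (k-1) u]
      rw [hdrop]
    have hvlen : (u.take (k-1)).length = k - 1 := by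
      simp; omega
    have hne : u[k-1] ≠ u[k] := by
      have := List.Nodup.getElem_inj_iff hu (i := k-1) (j := k) (hi := hk1) (hj := hk2)
      intro hcon
      have := this.1 hcon
      omega
    have hxy : ¬ u[k] < u[k-1] := by
      intro hlt
      exact hnot ((mem_Dset_iff u _).2 ⟨u.take (k-1), u[k-1], u[k], u.drop (k+1), hu', by omega, hlt⟩)
    have hlt : u[k-1] < u[k] := by omega
    refine ⟨(u.drop (k+1)).reverse, u[k], u[k-1], (u.take (k-1)).reverse, ?_, ?_, hlt⟩
    · have := congrArg List.reverse hu'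
      simpa using this
    · simp
      omega

lemma conj_descComp (u : List ℕ) (hu : u.Nodup) :
    conj (descComp u) = descComp u.reverse := by
  rcases u with _ | ⟨a, t⟩
  · simp [conj, descComp, compOfSet]
  · set u := a :: t with hudef
    have hsum : (descComp u).sum = u.length := descComp_sum u
    rw [conj, hsum, ← Dset_reverse u hu]
    have hsum' : u.length = (descComp u.reverse).sum := by
      rw [descComp_sum]; simp
    rw [hsum']
    exact compOfSet_Dset _ (descComp_pos _)

lemma telescope {H : Type} [CommRing H] (T : ℕ → H) : ∀ n : ℕ,
    ∑ i ∈ Finset.range (n+1),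
      (-1 : ℤ)^i • ((if i = 0 then (0:H) else T (i-1)) + (if i = n then 0 else T i)) = 0
  | 0 => by simp
  | n+1 => by
    have IH := telescope T n
    rw [Finset.sum_range_succ, Finset.sum_range_succ]
    rw [Finset.sum_range_succ] at IH
    have hc : ∀ i ∈ Finset.range n,
        (-1 : ℤ)^i • ((if i = 0 then (0:H) else T (i-1)) + (if i = n+1 then 0 else T i))
        = (-1 : ℤ)^i • ((if i = 0 then (0:H) else T (i-1)) + (if i = n then 0 else T i)) := by
      intro i hi
      have h1 : i ≠ n ∧ i ≠ n + 1 := by simp at hi; omega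
      rw [if_neg h1.1, if_neg h1.2]
    rw [Finset.sum_congr rfl hc]
    rw [if_neg (by omega : ¬ n = n + 1), if_neg (by omega : ¬ n + 1 = 0), if_pos rfl]
    rw [if_pos rfl] at IH
    rw [add_zero] at IH
    rw [add_zero]
    rw [eq_neg_of_add_eq_zero_left IH]
    rw [smul_add, pow_succ, mul_smul, neg_one_zsmul, Nat.add_sub_cancel]
    simp only [neg_one_zsmul, smul_neg]
    abel

lemma shuffles_nil_right {β : Type*} : ∀ v : List β, shuffles v [] = {v}
  | [] => by simp [shuffles]
  | a :: v => by simp [shuffles]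

lemma shuffles_nil_left {β : Type*} (w : List β) : shuffles [] w = {w} := by
  cases w <;> simp [shuffles]

lemma take_reverse_succ {w : List ℕ} {i : ℕ} (h0 : 0 < i) (hi : i - 1 < w.length) :
    (w.take i).reverse = w.getD (i-1) 0 :: (w.take (i-1)).reverse := by
  obtain ⟨j, rfl⟩ : ∃ j, i = j + 1 := ⟨i - 1, by omega⟩
  simp only [Nat.add_sub_cancel] at hi ⊢
  rw [List.take_succ, List.getElem?_eq_getElem hi, List.getD_eq_getElem _ _ hi]
  simp

lemma shuffle_telescope {H : Type} [CommRing H] (g : List ℕ → H) (w : List ℕ) (hw : w ≠ []) :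
    ∑ i ∈ Finset.range (w.length + 1),
      (-1:ℤ)^i • ((shuffles ((w.take i).reverse) (w.drop i)).map g).sum = 0 := by
  set n := w.length with hn
  have hn0 : 0 < n := by
    rw [hn]; exact List.length_pos_iff.2 hw
  set T : ℕ → H := fun i =>
    ((shuffles ((w.take i).reverse) (w.drop (i+1))).map (fun u => g (w.getD i 0 :: u))).sum
    with hT
  have key : ∀ i ∈ Finset.range (n+1),
      (-1:ℤ)^i • ((shuffles ((w.take i).reverse) (w.drop i)).map g).sum
      = (-1:ℤ)^i • ((if i = 0 then (0:H) else T (i-1)) + (if i = n then 0 else T i)) := by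
    intro i hi
    simp only [Finset.mem_range] at hi
    congr 1
    rcases Nat.eq_zero_or_pos i with rfl | hip
    · rw [if_pos rfl, if_neg (by omega), zero_add]
      rw [List.take_zero, List.reverse_nil, List.drop_zero, shuffles_nil_left]
      simp only [hT, List.take_zero, List.reverse_nil, Nat.zero_add, List.drop_one,
        shuffles_nil_left]
      simp only [Multiset.map_singleton, Multiset.sum_singleton]
      congr 1
      rcases w with _ | ⟨a, t⟩
      · exact absurd rfl hw
      · rfl
    · have hi1 : i - 1 < n := by omega
      rw [take_reverse_succ hip (by omega)]
      rcases Nat.lt_or_ge i n with hin | hin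
      · have hin' : i < w.length := by omega
        have hd : w.drop i = w.getD i 0 :: w.drop (i+1) := by
          rw [List.drop_eq_getElem_cons hin', List.getD_eq_getElem _ _ hin']
        rw [if_neg (by omega), if_neg (by omega)]
        rw [hd, shuffles]
        simp only [Multiset.map_add, Multiset.sum_add, Multiset.map_map, Function.comp_def]
        congr 1
        · simp only [hT]
          have e : i - 1 + 1 = i := by omega
          rw [e, hd]
        · simp only [hT]
          rw [take_reverse_succ hip (by omega)]
      · have hieq : i = n := by omega
        rw [hieq, if_neg (by omega : ¬ n = 0), if_pos rfl, add_zero]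
        rw [List.drop_of_length_le (by omega), shuffles_nil_right]
        simp only [hT]
        have e : n - 1 + 1 = n := by omega
        rw [e, List.drop_of_length_le (by omega), shuffles_nil_right]
        simp only [Multiset.map_singleton, Multiset.sum_singleton]
  rw [Finset.sum_congr rfl key]
  exact telescope T n

lemma antipode_one_eq (K : Type) (H : Type) [CommSemiring K] [Semiring H]
    [HopfAlgebra K H] : HopfAlgebra.antipode (R := K) (1 : H) = 1 := by
  have h1 := HopfAlgebra.mul_antipode_rTensor_comul_apply (R := K) (A := H) 1
  rw [Bialgebra.comul_one, Algebra.TensorProduct.one_def, LinearMap.rTensor_tmul,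
    LinearMap.mul'_apply, mul_one, Bialgebra.counit_one] at h1
  rw [h1, map_one]

lemma conj_nil : conj [] = [] := by simp [conj, compOfSet]

/-- In the Hopf algebra `QSym`, the antipode acts on the
fundamental basis by `S(F_α) = (-1)^{|α|} F_{α^t}`, where `α^t` is the
conjugate of `α`.  `QSym` in the fundamental basis is formalized as a Hopf
algebra `H` over a field `K` with a basis-indexing map `Fb` on compositions
satisfying: products are given by shuffles of modeling words (words of
distinct letters with prescribed descent compositions), the coproduct is given
by splitting the ribbon diagram at each of its `|α| + 1` cut positions, and
the counit rule. -/
theorem qsym_fundamental_antipode (K : Type) [Field K] (H : Type) [CommRing H]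
    [HopfAlgebra K H] (Fb : List ℕ → H)
    (hone : Fb [] = 1)
    (hmul : ∀ v w : List ℕ, v.Nodup → w.Nodup → (∀ x ∈ v, ∀ y ∈ w, x ≠ y) →
      Fb (descComp v) * Fb (descComp w) =
        ((shuffles v w).map (fun u => Fb (descComp u))).sum)
    (hcomul : ∀ α : List ℕ, (∀ i ∈ α, 0 < i) →
      Coalgebra.comul (R := K) (Fb α) =
        ∑ i ∈ Finset.range (α.sum + 1),
          Fb (splitComp α i).1 ⊗ₜ[K] Fb (splitComp α i).2)
    (hcounit : ∀ α : List ℕ, (∀ i ∈ α, 0 < i) →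
      Coalgebra.counit (R := K) (Fb α) = if α = [] then (1 : K) else 0)
    (α : List ℕ) (hα : ∀ i ∈ α, 0 < i) :
    HopfAlgebra.antipode (R := K) (Fb α) = ((-1 : ℤ) ^ α.sum) • Fb (conj α) := by
  suffices h : ∀ N : ℕ, ∀ α : List ℕ, α.sum ≤ N → (∀ i ∈ α, 0 < i) →
      HopfAlgebra.antipode (R := K) (Fb α) = ((-1 : ℤ) ^ α.sum) • Fb (conj α) by
    exact h α.sum α le_rfl hα
  intro N
  induction N with
  | zero =>
    intro α hs hpos
    have hnil : α = [] := by
      rcases α with _ | ⟨a, t⟩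
      · rfl
      · have := hpos a (by simp); simp at hs; omega
    subst hnil
    rw [conj_nil, hone]
    simpa using antipode_one_eq K H
  | succ N IH =>
    intro α hs hpos
    by_cases hnil : α = []
    · subst hnil
      rw [conj_nil, hone]
      simpa using antipode_one_eq K H
    · set n := α.sum with hn
      have hn0 : 0 < n := by
        rcases α with _ | ⟨a, t⟩
        · exact absurd rfl hnil
        · have := hpos a (by simp); simp [hn]; omega
      set w := wordOf α with hwdef
      have hwlen : w.length = n := by rw [hwdef, wordOf_length, hn]
      have hwnd : w.Nodup := wordOf_nodup α
      have hwdesc : descComp w = α := descComp_wordOf α hpos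
      have hwne : w ≠ [] := by
        intro h; rw [h] at hwlen; simp at hwlen; omega
      have hsplit : ∀ i, i ≤ n → splitComp α i
          = (descComp (w.take i), descComp (w.drop i)) := by
        intro i hi
        rw [← hwdesc]
        exact splitComp_descComp w i (by omega)
      -- the antipode identity
      have hid := HopfAlgebra.mul_antipode_rTensor_comul_apply (R := K) (A := H) (Fb α)
      rw [hcomul α hpos, map_sum, map_sum] at hid
      simp only [LinearMap.rTensor_tmul, LinearMap.mul'_apply] at hid
      rw [hcounit α hpos, if_neg hnil, map_zero] at hid
      rw [← hn, Finset.sum_range_succ] at hid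
      have hlast : splitComp α n = (α, []) := by
        rw [hsplit n le_rfl, List.take_of_length_le (by omega),
          List.drop_of_length_le (by omega), hwdesc]
        simp [descComp]
      rw [hlast] at hid
      simp only [hone, mul_one] at hid
      -- the combinatorial identity
      have hcomb := shuffle_telescope (fun u => Fb (descComp u)) w hwne
      rw [hwlen] at hcomb
      have hprod : ∀ i ∈ Finset.range (n+1),
          (-1:ℤ)^i • ((shuffles ((w.take i).reverse) (w.drop i)).map
            (fun u => Fb (descComp u))).sum
          = (-1:ℤ)^i • (Fb (descComp ((w.take i).reverse)) * Fb (descComp (w.drop i))) := by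
        intro i hi
        congr 1
        have hnd : w.Nodup := hwnd
        have hnd2 : ((w.take i) ++ (w.drop i)).Nodup := by
          rw [List.take_append_drop]; exact hnd
        have hdisj := (List.nodup_append.1 hnd2).2.2
        refine (hmul ((w.take i).reverse) (w.drop i)
          (List.nodup_reverse.2 (hnd.sublist (List.take_sublist _ _)))
          (hnd.sublist (List.drop_sublist _ _)) ?_).symm
        intro x hx y hy
        rw [List.mem_reverse] at hx
        intro hxy
        subst hxy
        exact hdisj _ hx _ hy rfl
      rw [Finset.sum_congr rfl hprod, Finset.sum_range_succ] at hcomb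
      have hAn : (w.take n).reverse = w.reverse := by
        rw [List.take_of_length_le (by omega)]
      have hBn : w.drop n = [] := List.drop_of_length_le (by omega)
      rw [hAn, hBn] at hcomb
      have hrev : descComp w.reverse = conj α := by
        rw [← hwdesc]
        exact (conj_descComp w hwnd).symm
      rw [hrev, show descComp [] = [] from rfl, hone, mul_one] at hcomb
      -- rewrite the antipode sum via the induction hypothesis
      have hterm : ∀ i ∈ Finset.range n,
          HopfAlgebra.antipode (R := K) (Fb (splitComp α i).1) * Fb (splitComp α i).2
          = (-1:ℤ)^i • (Fb (descComp ((w.take i).reverse)) * Fb (descComp (w.drop i))) := by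
        intro i hi
        simp only [Finset.mem_range] at hi
        rw [hsplit i (by omega)]
        dsimp only
        have hsum_take : (descComp (w.take i)).sum = i := by
          rw [descComp_sum, List.length_take]
          omega
        have hIH := IH (descComp (w.take i)) (by omega) (descComp_pos _)
        rw [hIH, hsum_take, conj_descComp (w.take i) (hwnd.sublist (List.take_sublist _ _)),
          smul_mul_assoc]
      rw [Finset.sum_congr rfl hterm] at hid
      exact add_left_cancel (hid.trans hcomb.symm)
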